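/- Let Θ : ℝ¹⁰ → ℝ be a smooth function of (x¹,…,x⁵,y¹,…,y⁵) and set ω_{ik} = Θ_{x^i y^k} − Θ_{x^k y^i} for i,k = 1,…,5. Then, with ε^{iklm} the Levi-Civita symbol on four indices and all sums over i,k,l,m from 1 to 4, the identity ∂_{y⁵}( Σ ε^{iklm} ω_{ik} ω_{lm} ) = 4 Σ ∂_{y^m}( ε^{iklm} ω_{ik} ω_{l5} ) holds at every point of ℝ¹⁰. -/

import Mathlib

noncomputable section

/-- Partial derivative of `f : ℝⁿ → ℝ` in the `i`-th coordinate direction. -/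
def pd {n : ℕ} (i : Fin n) (f : (Fin n → ℝ) → ℝ) : (Fin n → ℝ) → ℝ :=
  fun p => fderiv ℝ f p (Pi.single i 1)

/-- `∂/∂x^i` on functions of `(x¹,…,x⁵,y¹,…,y⁵) ∈ ℝ¹⁰`. -/
def px5 (i : Fin 5) (f : (Fin 10 → ℝ) → ℝ) : (Fin 10 → ℝ) → ℝ :=
  pd ⟨i.val, by omega⟩ f

/-- `∂/∂y^i` on functions of `(x¹,…,x⁵,y¹,…,y⁵) ∈ ℝ¹⁰`. -/
def py5 (i : Fin 5) (f : (Fin 10 → ℝ) → ℝ) : (Fin 10 → ℝ) → ℝ :=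
  pd ⟨i.val + 5, by omega⟩ f

/-- Levi-Civita symbol on indices `1,…,4`. -/
def eps4 (i k l m : Fin 4) : ℝ :=
  Matrix.det (Matrix.of fun r c : Fin 4 => if (![i, k, l, m]) r = c then (1 : ℝ) else 0)

/-- `ω_{ik} = Θ_{x^i y^k} − Θ_{x^k y^i}` for `i,k = 1,…,5`. -/
def omg5 (Θ : (Fin 10 → ℝ) → ℝ) (i k : Fin 5) : (Fin 10 → ℝ) → ℝ :=
  fun p => px5 i (py5 k Θ) p - px5 k (py5 i Θ) p

/-- The embedding of the indices `1,…,4` into `1,…,5`. -/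
def e45 (i : Fin 4) : Fin 5 := i.castSucc

/-! ### Auxiliary lemmas -/

theorem pd_contDiff {n : ℕ} (i : Fin n) {f : (Fin n → ℝ) → ℝ}
    (hf : ContDiff ℝ (⊤ : ℕ∞) f) : ContDiff ℝ (⊤ : ℕ∞) (pd i f) :=
  (hf.fderiv_right (by exact_mod_cast le_top)).clm_apply contDiff_const

theorem pd_comm {n : ℕ} (i j : Fin n) {f : (Fin n → ℝ) → ℝ}
    (hf : ContDiff ℝ (⊤ : ℕ∞) f) (p : Fin n → ℝ) :
    pd i (pd j f) p = pd j (pd i f) p := by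
  have hsymm : IsSymmSndFDerivAt ℝ f p := by
    apply ContDiffAt.isSymmSndFDerivAt (n := (⊤:ℕ∞)) hf.contDiffAt
    rw [minSmoothness_of_isRCLikeNormedField, show ((2:WithTop ℕ∞)) = ((2:ℕ∞):WithTop ℕ∞) by rfl]; exact WithTop.coe_le_coe.mpr le_top
  have hd : DifferentiableAt ℝ (fderiv ℝ f) p :=
    ((hf.fderiv_right (m := ((⊤:ℕ∞) : WithTop ℕ∞)) (by exact_mod_cast le_top)).differentiable
      (by simp)) p
  have key : ∀ v w : Fin n → ℝ,
      fderiv ℝ (fun q => fderiv ℝ f q v) p w = fderiv ℝ (fderiv ℝ f) p w v := by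
    intro v w
    rw [fderiv_clm_apply hd (differentiableAt_const v)]
    simp
  unfold pd
  rw [key, key, hsymm.eq]

theorem pd_sum {n : ℕ} (j : Fin n) {ι : Type*} (s : Finset ι)
    (A : ι → (Fin n → ℝ) → ℝ) (pt : Fin n → ℝ)
    (h : ∀ i ∈ s, DifferentiableAt ℝ (A i) pt) :
    pd j (fun q => ∑ i ∈ s, A i q) pt = ∑ i ∈ s, pd j (A i) pt := by
  unfold pd
  rw [fderiv_fun_sum h]
  simp [ContinuousLinearMap.sum_apply]

theorem pd_cmul_mul {n : ℕ} (j : Fin n) (c : ℝ) (f g : (Fin n → ℝ) → ℝ)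
    (pt : Fin n → ℝ) (hf : DifferentiableAt ℝ f pt) (hg : DifferentiableAt ℝ g pt) :
    pd j (fun q => c * f q * g q) pt
      = c * (pd j f pt * g pt) + c * (f pt * pd j g pt) := by
  unfold pd
  rw [show (fun q => c * f q * g q) = fun q => (fun q' => c * f q') q * g q from rfl,
    fderiv_fun_mul (hf.const_mul c) hg, fderiv_const_mul hf c]
  simp
  ring

theorem pd_sub {n : ℕ} (j : Fin n) (f g : (Fin n → ℝ) → ℝ) (pt : Fin n → ℝ)
    (hf : DifferentiableAt ℝ f pt) (hg : DifferentiableAt ℝ g pt) :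
    pd j (fun q => f q - g q) pt = pd j f pt - pd j g pt := by
  unfold pd
  rw [fderiv_fun_sub hf hg]
  simp

/-! ### Levi-Civita evaluation -/

def epsZ (i k l m : Fin 4) : ℤ :=
  Matrix.det (Matrix.of fun r c : Fin 4 => if (![i, k, l, m]) r = c then (1 : ℤ) else 0)

theorem eps4_eq (i k l m : Fin 4) : eps4 i k l m = (epsZ i k l m : ℝ) := by
  have h := RingHom.map_det (Int.castRingHom ℝ)
    (Matrix.of fun r c : Fin 4 => if (![i, k, l, m]) r = c then (1 : ℤ) else 0)
  rw [eps4, epsZ, show (((Matrix.of fun r c : Fin 4 => if (![i, k, l, m]) r = c then (1 : ℤ) else 0).det : ℤ) : ℝ)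
      = (Int.castRingHom ℝ) (Matrix.of fun r c : Fin 4 => if (![i, k, l, m]) r = c then (1 : ℤ) else 0).det from rfl,
    h]
  congr 1
  ext r c
  simp [Matrix.map_apply, apply_ite (Int.cast : ℤ → ℝ)]

theorem epsZ_0000 : epsZ 0 0 0 0 = 0 := by decide
theorem epsZ_0001 : epsZ 0 0 0 1 = 0 := by decide
theorem epsZ_0002 : epsZ 0 0 0 2 = 0 := by decide
theorem epsZ_0003 : epsZ 0 0 0 3 = 0 := by decide
theorem epsZ_0010 : epsZ 0 0 1 0 = 0 := by decide
theorem epsZ_0011 : epsZ 0 0 1 1 = 0 := by decide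
theorem epsZ_0012 : epsZ 0 0 1 2 = 0 := by decide
theorem epsZ_0013 : epsZ 0 0 1 3 = 0 := by decide
theorem epsZ_0020 : epsZ 0 0 2 0 = 0 := by decide
theorem epsZ_0021 : epsZ 0 0 2 1 = 0 := by decide
theorem epsZ_0022 : epsZ 0 0 2 2 = 0 := by decide
theorem epsZ_0023 : epsZ 0 0 2 3 = 0 := by decide
theorem epsZ_0030 : epsZ 0 0 3 0 = 0 := by decide
theorem epsZ_0031 : epsZ 0 0 3 1 = 0 := by decide
theorem epsZ_0032 : epsZ 0 0 3 2 = 0 := by decide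
theorem epsZ_0033 : epsZ 0 0 3 3 = 0 := by decide
theorem epsZ_0100 : epsZ 0 1 0 0 = 0 := by decide
theorem epsZ_0101 : epsZ 0 1 0 1 = 0 := by decide
theorem epsZ_0102 : epsZ 0 1 0 2 = 0 := by decide
theorem epsZ_0103 : epsZ 0 1 0 3 = 0 := by decide
theorem epsZ_0110 : epsZ 0 1 1 0 = 0 := by decide
theorem epsZ_0111 : epsZ 0 1 1 1 = 0 := by decide
theorem epsZ_0112 : epsZ 0 1 1 2 = 0 := by decide
theorem epsZ_0113 : epsZ 0 1 1 3 = 0 := by decide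
theorem epsZ_0120 : epsZ 0 1 2 0 = 0 := by decide
theorem epsZ_0121 : epsZ 0 1 2 1 = 0 := by decide
theorem epsZ_0122 : epsZ 0 1 2 2 = 0 := by decide
theorem epsZ_0123 : epsZ 0 1 2 3 = 1 := by decide
theorem epsZ_0130 : epsZ 0 1 3 0 = 0 := by decide
theorem epsZ_0131 : epsZ 0 1 3 1 = 0 := by decide
theorem epsZ_0132 : epsZ 0 1 3 2 = -1 := by decide
theorem epsZ_0133 : epsZ 0 1 3 3 = 0 := by decide
theorem epsZ_0200 : epsZ 0 2 0 0 = 0 := by decide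
theorem epsZ_0201 : epsZ 0 2 0 1 = 0 := by decide
theorem epsZ_0202 : epsZ 0 2 0 2 = 0 := by decide
theorem epsZ_0203 : epsZ 0 2 0 3 = 0 := by decide
theorem epsZ_0210 : epsZ 0 2 1 0 = 0 := by decide
theorem epsZ_0211 : epsZ 0 2 1 1 = 0 := by decide
theorem epsZ_0212 : epsZ 0 2 1 2 = 0 := by decide
theorem epsZ_0213 : epsZ 0 2 1 3 = -1 := by decide
theorem epsZ_0220 : epsZ 0 2 2 0 = 0 := by decide
theorem epsZ_0221 : epsZ 0 2 2 1 = 0 := by decide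
theorem epsZ_0222 : epsZ 0 2 2 2 = 0 := by decide
theorem epsZ_0223 : epsZ 0 2 2 3 = 0 := by decide
theorem epsZ_0230 : epsZ 0 2 3 0 = 0 := by decide
theorem epsZ_0231 : epsZ 0 2 3 1 = 1 := by decide
theorem epsZ_0232 : epsZ 0 2 3 2 = 0 := by decide
theorem epsZ_0233 : epsZ 0 2 3 3 = 0 := by decide
theorem epsZ_0300 : epsZ 0 3 0 0 = 0 := by decide
theorem epsZ_0301 : epsZ 0 3 0 1 = 0 := by decide
theorem epsZ_0302 : epsZ 0 3 0 2 = 0 := by decide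
theorem epsZ_0303 : epsZ 0 3 0 3 = 0 := by decide
theorem epsZ_0310 : epsZ 0 3 1 0 = 0 := by decide
theorem epsZ_0311 : epsZ 0 3 1 1 = 0 := by decide
theorem epsZ_0312 : epsZ 0 3 1 2 = 1 := by decide
theorem epsZ_0313 : epsZ 0 3 1 3 = 0 := by decide
theorem epsZ_0320 : epsZ 0 3 2 0 = 0 := by decide
theorem epsZ_0321 : epsZ 0 3 2 1 = -1 := by decide
theorem epsZ_0322 : epsZ 0 3 2 2 = 0 := by decide
theorem epsZ_0323 : epsZ 0 3 2 3 = 0 := by decide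
theorem epsZ_0330 : epsZ 0 3 3 0 = 0 := by decide
theorem epsZ_0331 : epsZ 0 3 3 1 = 0 := by decide
theorem epsZ_0332 : epsZ 0 3 3 2 = 0 := by decide
theorem epsZ_0333 : epsZ 0 3 3 3 = 0 := by decide
theorem epsZ_1000 : epsZ 1 0 0 0 = 0 := by decide
theorem epsZ_1001 : epsZ 1 0 0 1 = 0 := by decide
theorem epsZ_1002 : epsZ 1 0 0 2 = 0 := by decide
theorem epsZ_1003 : epsZ 1 0 0 3 = 0 := by decide
theorem epsZ_1010 : epsZ 1 0 1 0 = 0 := by decide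
theorem epsZ_1011 : epsZ 1 0 1 1 = 0 := by decide
theorem epsZ_1012 : epsZ 1 0 1 2 = 0 := by decide
theorem epsZ_1013 : epsZ 1 0 1 3 = 0 := by decide
theorem epsZ_1020 : epsZ 1 0 2 0 = 0 := by decide
theorem epsZ_1021 : epsZ 1 0 2 1 = 0 := by decide
theorem epsZ_1022 : epsZ 1 0 2 2 = 0 := by decide
theorem epsZ_1023 : epsZ 1 0 2 3 = -1 := by decide
theorem epsZ_1030 : epsZ 1 0 3 0 = 0 := by decide
theorem epsZ_1031 : epsZ 1 0 3 1 = 0 := by decide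
theorem epsZ_1032 : epsZ 1 0 3 2 = 1 := by decide
theorem epsZ_1033 : epsZ 1 0 3 3 = 0 := by decide
theorem epsZ_1100 : epsZ 1 1 0 0 = 0 := by decide
theorem epsZ_1101 : epsZ 1 1 0 1 = 0 := by decide
theorem epsZ_1102 : epsZ 1 1 0 2 = 0 := by decide
theorem epsZ_1103 : epsZ 1 1 0 3 = 0 := by decide
theorem epsZ_1110 : epsZ 1 1 1 0 = 0 := by decide
theorem epsZ_1111 : epsZ 1 1 1 1 = 0 := by decide
theorem epsZ_1112 : epsZ 1 1 1 2 = 0 := by decide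
theorem epsZ_1113 : epsZ 1 1 1 3 = 0 := by decide
theorem epsZ_1120 : epsZ 1 1 2 0 = 0 := by decide
theorem epsZ_1121 : epsZ 1 1 2 1 = 0 := by decide
theorem epsZ_1122 : epsZ 1 1 2 2 = 0 := by decide
theorem epsZ_1123 : epsZ 1 1 2 3 = 0 := by decide
theorem epsZ_1130 : epsZ 1 1 3 0 = 0 := by decide
theorem epsZ_1131 : epsZ 1 1 3 1 = 0 := by decide
theorem epsZ_1132 : epsZ 1 1 3 2 = 0 := by decide
theorem epsZ_1133 : epsZ 1 1 3 3 = 0 := by decide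
theorem epsZ_1200 : epsZ 1 2 0 0 = 0 := by decide
theorem epsZ_1201 : epsZ 1 2 0 1 = 0 := by decide
theorem epsZ_1202 : epsZ 1 2 0 2 = 0 := by decide
theorem epsZ_1203 : epsZ 1 2 0 3 = 1 := by decide
theorem epsZ_1210 : epsZ 1 2 1 0 = 0 := by decide
theorem epsZ_1211 : epsZ 1 2 1 1 = 0 := by decide
theorem epsZ_1212 : epsZ 1 2 1 2 = 0 := by decide
theorem epsZ_1213 : epsZ 1 2 1 3 = 0 := by decide
theorem epsZ_1220 : epsZ 1 2 2 0 = 0 := by decide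
theorem epsZ_1221 : epsZ 1 2 2 1 = 0 := by decide
theorem epsZ_1222 : epsZ 1 2 2 2 = 0 := by decide
theorem epsZ_1223 : epsZ 1 2 2 3 = 0 := by decide
theorem epsZ_1230 : epsZ 1 2 3 0 = -1 := by decide
theorem epsZ_1231 : epsZ 1 2 3 1 = 0 := by decide
theorem epsZ_1232 : epsZ 1 2 3 2 = 0 := by decide
theorem epsZ_1233 : epsZ 1 2 3 3 = 0 := by decide
theorem epsZ_1300 : epsZ 1 3 0 0 = 0 := by decide
theorem epsZ_1301 : epsZ 1 3 0 1 = 0 := by decide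
theorem epsZ_1302 : epsZ 1 3 0 2 = -1 := by decide
theorem epsZ_1303 : epsZ 1 3 0 3 = 0 := by decide
theorem epsZ_1310 : epsZ 1 3 1 0 = 0 := by decide
theorem epsZ_1311 : epsZ 1 3 1 1 = 0 := by decide
theorem epsZ_1312 : epsZ 1 3 1 2 = 0 := by decide
theorem epsZ_1313 : epsZ 1 3 1 3 = 0 := by decide
theorem epsZ_1320 : epsZ 1 3 2 0 = 1 := by decide
theorem epsZ_1321 : epsZ 1 3 2 1 = 0 := by decide
theorem epsZ_1322 : epsZ 1 3 2 2 = 0 := by decide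
theorem epsZ_1323 : epsZ 1 3 2 3 = 0 := by decide
theorem epsZ_1330 : epsZ 1 3 3 0 = 0 := by decide
theorem epsZ_1331 : epsZ 1 3 3 1 = 0 := by decide
theorem epsZ_1332 : epsZ 1 3 3 2 = 0 := by decide
theorem epsZ_1333 : epsZ 1 3 3 3 = 0 := by decide
theorem epsZ_2000 : epsZ 2 0 0 0 = 0 := by decide
theorem epsZ_2001 : epsZ 2 0 0 1 = 0 := by decide
theorem epsZ_2002 : epsZ 2 0 0 2 = 0 := by decide
theorem epsZ_2003 : epsZ 2 0 0 3 = 0 := by decide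
theorem epsZ_2010 : epsZ 2 0 1 0 = 0 := by decide
theorem epsZ_2011 : epsZ 2 0 1 1 = 0 := by decide
theorem epsZ_2012 : epsZ 2 0 1 2 = 0 := by decide
theorem epsZ_2013 : epsZ 2 0 1 3 = 1 := by decide
theorem epsZ_2020 : epsZ 2 0 2 0 = 0 := by decide
theorem epsZ_2021 : epsZ 2 0 2 1 = 0 := by decide
theorem epsZ_2022 : epsZ 2 0 2 2 = 0 := by decide
theorem epsZ_2023 : epsZ 2 0 2 3 = 0 := by decide
theorem epsZ_2030 : epsZ 2 0 3 0 = 0 := by decide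
theorem epsZ_2031 : epsZ 2 0 3 1 = -1 := by decide
theorem epsZ_2032 : epsZ 2 0 3 2 = 0 := by decide
theorem epsZ_2033 : epsZ 2 0 3 3 = 0 := by decide
theorem epsZ_2100 : epsZ 2 1 0 0 = 0 := by decide
theorem epsZ_2101 : epsZ 2 1 0 1 = 0 := by decide
theorem epsZ_2102 : epsZ 2 1 0 2 = 0 := by decide
theorem epsZ_2103 : epsZ 2 1 0 3 = -1 := by decide
theorem epsZ_2110 : epsZ 2 1 1 0 = 0 := by decide
theorem epsZ_2111 : epsZ 2 1 1 1 = 0 := by decide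
theorem epsZ_2112 : epsZ 2 1 1 2 = 0 := by decide
theorem epsZ_2113 : epsZ 2 1 1 3 = 0 := by decide
theorem epsZ_2120 : epsZ 2 1 2 0 = 0 := by decide
theorem epsZ_2121 : epsZ 2 1 2 1 = 0 := by decide
theorem epsZ_2122 : epsZ 2 1 2 2 = 0 := by decide
theorem epsZ_2123 : epsZ 2 1 2 3 = 0 := by decide
theorem epsZ_2130 : epsZ 2 1 3 0 = 1 := by decide
theorem epsZ_2131 : epsZ 2 1 3 1 = 0 := by decide
theorem epsZ_2132 : epsZ 2 1 3 2 = 0 := by decide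
theorem epsZ_2133 : epsZ 2 1 3 3 = 0 := by decide
theorem epsZ_2200 : epsZ 2 2 0 0 = 0 := by decide
theorem epsZ_2201 : epsZ 2 2 0 1 = 0 := by decide
theorem epsZ_2202 : epsZ 2 2 0 2 = 0 := by decide
theorem epsZ_2203 : epsZ 2 2 0 3 = 0 := by decide
theorem epsZ_2210 : epsZ 2 2 1 0 = 0 := by decide
theorem epsZ_2211 : epsZ 2 2 1 1 = 0 := by decide
theorem epsZ_2212 : epsZ 2 2 1 2 = 0 := by decide
theorem epsZ_2213 : epsZ 2 2 1 3 = 0 := by decide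
theorem epsZ_2220 : epsZ 2 2 2 0 = 0 := by decide
theorem epsZ_2221 : epsZ 2 2 2 1 = 0 := by decide
theorem epsZ_2222 : epsZ 2 2 2 2 = 0 := by decide
theorem epsZ_2223 : epsZ 2 2 2 3 = 0 := by decide
theorem epsZ_2230 : epsZ 2 2 3 0 = 0 := by decide
theorem epsZ_2231 : epsZ 2 2 3 1 = 0 := by decide
theorem epsZ_2232 : epsZ 2 2 3 2 = 0 := by decide
theorem epsZ_2233 : epsZ 2 2 3 3 = 0 := by decide
theorem epsZ_2300 : epsZ 2 3 0 0 = 0 := by decide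
theorem epsZ_2301 : epsZ 2 3 0 1 = 1 := by decide
theorem epsZ_2302 : epsZ 2 3 0 2 = 0 := by decide
theorem epsZ_2303 : epsZ 2 3 0 3 = 0 := by decide
theorem epsZ_2310 : epsZ 2 3 1 0 = -1 := by decide
theorem epsZ_2311 : epsZ 2 3 1 1 = 0 := by decide
theorem epsZ_2312 : epsZ 2 3 1 2 = 0 := by decide
theorem epsZ_2313 : epsZ 2 3 1 3 = 0 := by decide
theorem epsZ_2320 : epsZ 2 3 2 0 = 0 := by decide
theorem epsZ_2321 : epsZ 2 3 2 1 = 0 := by decide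
theorem epsZ_2322 : epsZ 2 3 2 2 = 0 := by decide
theorem epsZ_2323 : epsZ 2 3 2 3 = 0 := by decide
theorem epsZ_2330 : epsZ 2 3 3 0 = 0 := by decide
theorem epsZ_2331 : epsZ 2 3 3 1 = 0 := by decide
theorem epsZ_2332 : epsZ 2 3 3 2 = 0 := by decide
theorem epsZ_2333 : epsZ 2 3 3 3 = 0 := by decide
theorem epsZ_3000 : epsZ 3 0 0 0 = 0 := by decide
theorem epsZ_3001 : epsZ 3 0 0 1 = 0 := by decide
theorem epsZ_3002 : epsZ 3 0 0 2 = 0 := by decide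
theorem epsZ_3003 : epsZ 3 0 0 3 = 0 := by decide
theorem epsZ_3010 : epsZ 3 0 1 0 = 0 := by decide
theorem epsZ_3011 : epsZ 3 0 1 1 = 0 := by decide
theorem epsZ_3012 : epsZ 3 0 1 2 = -1 := by decide
theorem epsZ_3013 : epsZ 3 0 1 3 = 0 := by decide
theorem epsZ_3020 : epsZ 3 0 2 0 = 0 := by decide
theorem epsZ_3021 : epsZ 3 0 2 1 = 1 := by decide
theorem epsZ_3022 : epsZ 3 0 2 2 = 0 := by decide
theorem epsZ_3023 : epsZ 3 0 2 3 = 0 := by decide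
theorem epsZ_3030 : epsZ 3 0 3 0 = 0 := by decide
theorem epsZ_3031 : epsZ 3 0 3 1 = 0 := by decide
theorem epsZ_3032 : epsZ 3 0 3 2 = 0 := by decide
theorem epsZ_3033 : epsZ 3 0 3 3 = 0 := by decide
theorem epsZ_3100 : epsZ 3 1 0 0 = 0 := by decide
theorem epsZ_3101 : epsZ 3 1 0 1 = 0 := by decide
theorem epsZ_3102 : epsZ 3 1 0 2 = 1 := by decide
theorem epsZ_3103 : epsZ 3 1 0 3 = 0 := by decide
theorem epsZ_3110 : epsZ 3 1 1 0 = 0 := by decide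
theorem epsZ_3111 : epsZ 3 1 1 1 = 0 := by decide
theorem epsZ_3112 : epsZ 3 1 1 2 = 0 := by decide
theorem epsZ_3113 : epsZ 3 1 1 3 = 0 := by decide
theorem epsZ_3120 : epsZ 3 1 2 0 = -1 := by decide
theorem epsZ_3121 : epsZ 3 1 2 1 = 0 := by decide
theorem epsZ_3122 : epsZ 3 1 2 2 = 0 := by decide
theorem epsZ_3123 : epsZ 3 1 2 3 = 0 := by decide
theorem epsZ_3130 : epsZ 3 1 3 0 = 0 := by decide
theorem epsZ_3131 : epsZ 3 1 3 1 = 0 := by decide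
theorem epsZ_3132 : epsZ 3 1 3 2 = 0 := by decide
theorem epsZ_3133 : epsZ 3 1 3 3 = 0 := by decide
theorem epsZ_3200 : epsZ 3 2 0 0 = 0 := by decide
theorem epsZ_3201 : epsZ 3 2 0 1 = -1 := by decide
theorem epsZ_3202 : epsZ 3 2 0 2 = 0 := by decide
theorem epsZ_3203 : epsZ 3 2 0 3 = 0 := by decide
theorem epsZ_3210 : epsZ 3 2 1 0 = 1 := by decide
theorem epsZ_3211 : epsZ 3 2 1 1 = 0 := by decide
theorem epsZ_3212 : epsZ 3 2 1 2 = 0 := by decide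
theorem epsZ_3213 : epsZ 3 2 1 3 = 0 := by decide
theorem epsZ_3220 : epsZ 3 2 2 0 = 0 := by decide
theorem epsZ_3221 : epsZ 3 2 2 1 = 0 := by decide
theorem epsZ_3222 : epsZ 3 2 2 2 = 0 := by decide
theorem epsZ_3223 : epsZ 3 2 2 3 = 0 := by decide
theorem epsZ_3230 : epsZ 3 2 3 0 = 0 := by decide
theorem epsZ_3231 : epsZ 3 2 3 1 = 0 := by decide
theorem epsZ_3232 : epsZ 3 2 3 2 = 0 := by decide
theorem epsZ_3233 : epsZ 3 2 3 3 = 0 := by decide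
theorem epsZ_3300 : epsZ 3 3 0 0 = 0 := by decide
theorem epsZ_3301 : epsZ 3 3 0 1 = 0 := by decide
theorem epsZ_3302 : epsZ 3 3 0 2 = 0 := by decide
theorem epsZ_3303 : epsZ 3 3 0 3 = 0 := by decide
theorem epsZ_3310 : epsZ 3 3 1 0 = 0 := by decide
theorem epsZ_3311 : epsZ 3 3 1 1 = 0 := by decide
theorem epsZ_3312 : epsZ 3 3 1 2 = 0 := by decide
theorem epsZ_3313 : epsZ 3 3 1 3 = 0 := by decide
theorem epsZ_3320 : epsZ 3 3 2 0 = 0 := by decide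
theorem epsZ_3321 : epsZ 3 3 2 1 = 0 := by decide
theorem epsZ_3322 : epsZ 3 3 2 2 = 0 := by decide
theorem epsZ_3323 : epsZ 3 3 2 3 = 0 := by decide
theorem epsZ_3330 : epsZ 3 3 3 0 = 0 := by decide
theorem epsZ_3331 : epsZ 3 3 3 1 = 0 := by decide
theorem epsZ_3332 : epsZ 3 3 3 2 = 0 := by decide
theorem epsZ_3333 : epsZ 3 3 3 3 = 0 := by decide

theorem e45_0 : e45 0 = 0 := rfl
theorem e45_1 : e45 1 = 1 := rfl
theorem e45_2 : e45 2 = 2 := rfl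
theorem e45_3 : e45 3 = 3 := rfl
theorem last4 : (Fin.last 4 : Fin 5) = 4 := rfl

set_option maxHeartbeats 4000000 in
theorem core (S : Fin 5 → Fin 5 → ℝ) (T : Fin 5 → Fin 5 → Fin 5 → ℝ)
    (hT : ∀ a b c, T a b c = T a c b) :
    (∑ i : Fin 4, ∑ k : Fin 4, ∑ l : Fin 4, ∑ m : Fin 4,
      (eps4 i k l m * ((T (e45 i) (e45 k) (Fin.last 4) - T (e45 k) (e45 i) (Fin.last 4))
          * (S (e45 l) (e45 m) - S (e45 m) (e45 l)))
        + eps4 i k l m * ((S (e45 i) (e45 k) - S (e45 k) (e45 i))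
          * (T (e45 l) (e45 m) (Fin.last 4) - T (e45 m) (e45 l) (Fin.last 4)))))
    = 4 * ∑ m : Fin 4, ∑ i : Fin 4, ∑ k : Fin 4, ∑ l : Fin 4,
      (eps4 i k l m * ((T (e45 i) (e45 k) (e45 m) - T (e45 k) (e45 i) (e45 m))
          * (S (e45 l) (Fin.last 4) - S (Fin.last 4) (e45 l)))
        + eps4 i k l m * ((S (e45 i) (e45 k) - S (e45 k) (e45 i))
          * (T (e45 l) (Fin.last 4) (e45 m) - T (Fin.last 4) (e45 l) (e45 m)))) := by
  simp only [Fin.sum_univ_four, e45_0, e45_1, e45_2, e45_3, last4, eps4_eq,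
    epsZ_0000, epsZ_0001, epsZ_0002, epsZ_0003, epsZ_0010, epsZ_0011, epsZ_0012, epsZ_0013, epsZ_0020, epsZ_0021, epsZ_0022, epsZ_0023, epsZ_0030, epsZ_0031, epsZ_0032, epsZ_0033, epsZ_0100, epsZ_0101, epsZ_0102, epsZ_0103, epsZ_0110, epsZ_0111, epsZ_0112, epsZ_0113, epsZ_0120, epsZ_0121, epsZ_0122, epsZ_0123, epsZ_0130, epsZ_0131, epsZ_0132, epsZ_0133, epsZ_0200, epsZ_0201, epsZ_0202, epsZ_0203, epsZ_0210, epsZ_0211, epsZ_0212, epsZ_0213, epsZ_0220, epsZ_0221, epsZ_0222, epsZ_0223, epsZ_0230, epsZ_0231, epsZ_0232, epsZ_0233, epsZ_0300, epsZ_0301, epsZ_0302, epsZ_0303, epsZ_0310, epsZ_0311, epsZ_0312, epsZ_0313, epsZ_0320, epsZ_0321, epsZ_0322, epsZ_0323, epsZ_0330, epsZ_0331, epsZ_0332, epsZ_0333, epsZ_1000, epsZ_1001, epsZ_1002, epsZ_1003, epsZ_1010, epsZ_1011, epsZ_1012, epsZ_1013, epsZ_1020, epsZ_1021, epsZ_1022,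 epsZ_1023, epsZ_1030, epsZ_1031, epsZ_1032, epsZ_1033, epsZ_1100, epsZ_1101, epsZ_1102, epsZ_1103, epsZ_1110, epsZ_1111, epsZ_1112, epsZ_1113, epsZ_1120, epsZ_1121, epsZ_1122, epsZ_1123, epsZ_1130, epsZ_1131, epsZ_1132, epsZ_1133, epsZ_1200, epsZ_1201, epsZ_1202, epsZ_1203, epsZ_1210, epsZ_1211, epsZ_1212, epsZ_1213, epsZ_1220, epsZ_1221, epsZ_1222, epsZ_1223, epsZ_1230, epsZ_1231, epsZ_1232, epsZ_1233, epsZ_1300, epsZ_1301, epsZ_1302, epsZ_1303, epsZ_1310, epsZ_1311, epsZ_1312, epsZ_1313, epsZ_1320, epsZ_1321, epsZ_1322, epsZ_1323, epsZ_1330, epsZ_1331, epsZ_1332, epsZ_1333, epsZ_2000, epsZ_2001, epsZ_2002, epsZ_2003, epsZ_2010, epsZ_2011, epsZ_2012, epsZ_2013, epsZ_2020, epsZ_2021, epsZ_2022, epsZ_2023, epsZ_2030, epsZ_2031, epsZ_2032, epsZ_2033, epsZ_2100, epsZ_2101, epsZ_2102, epsZ_2103, epsZ_2110, epsZ_2111,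 epsZ_2112, epsZ_2113, epsZ_2120, epsZ_2121, epsZ_2122, epsZ_2123, epsZ_2130, epsZ_2131, epsZ_2132, epsZ_2133, epsZ_2200, epsZ_2201, epsZ_2202, epsZ_2203, epsZ_2210, epsZ_2211, epsZ_2212, epsZ_2213, epsZ_2220, epsZ_2221, epsZ_2222, epsZ_2223, epsZ_2230, epsZ_2231, epsZ_2232, epsZ_2233, epsZ_2300, epsZ_2301, epsZ_2302, epsZ_2303, epsZ_2310, epsZ_2311, epsZ_2312, epsZ_2313, epsZ_2320, epsZ_2321, epsZ_2322, epsZ_2323, epsZ_2330, epsZ_2331, epsZ_2332, epsZ_2333, epsZ_3000, epsZ_3001, epsZ_3002, epsZ_3003, epsZ_3010, epsZ_3011, epsZ_3012, epsZ_3013, epsZ_3020, epsZ_3021, epsZ_3022, epsZ_3023, epsZ_3030, epsZ_3031, epsZ_3032, epsZ_3033, epsZ_3100, epsZ_3101, epsZ_3102, epsZ_3103, epsZ_3110, epsZ_3111, epsZ_3112, epsZ_3113, epsZ_3120, epsZ_3121, epsZ_3122, epsZ_3123, epsZ_3130, epsZ_3131, epsZ_3132, epsZ_3133, epsZ_3200,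 epsZ_3201, epsZ_3202, epsZ_3203, epsZ_3210, epsZ_3211, epsZ_3212, epsZ_3213, epsZ_3220, epsZ_3221, epsZ_3222, epsZ_3223, epsZ_3230, epsZ_3231, epsZ_3232, epsZ_3233, epsZ_3300, epsZ_3301, epsZ_3302, epsZ_3303, epsZ_3310, epsZ_3311, epsZ_3312, epsZ_3313, epsZ_3320, epsZ_3321, epsZ_3322, epsZ_3323, epsZ_3330, epsZ_3331, epsZ_3332, epsZ_3333,
    hT]
  push_cast
  ring

theorem py5_sum (c : Fin 5) {ι : Type*} (s : Finset ι) (A : ι → (Fin 10 → ℝ) → ℝ)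
    (pt : Fin 10 → ℝ) (h : ∀ i ∈ s, DifferentiableAt ℝ (A i) pt) :
    py5 c (fun q => ∑ i ∈ s, A i q) pt = ∑ i ∈ s, py5 c (A i) pt :=
  pd_sum _ s A pt h

theorem py5_cmul_mul (c : Fin 5) (co : ℝ) (f g : (Fin 10 → ℝ) → ℝ) (pt : Fin 10 → ℝ)
    (hf : DifferentiableAt ℝ f pt) (hg : DifferentiableAt ℝ g pt) :
    py5 c (fun q => co * f q * g q) pt
      = co * (py5 c f pt * g pt) + co * (f pt * py5 c g pt) :=
  pd_cmul_mul _ co f g pt hf hg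

set_option maxHeartbeats 1000000 in
/-- the identity
`∂_{y⁵}( Σ ε^{iklm} ω_{ik} ω_{lm} ) = 4 Σ ∂_{y^m}( ε^{iklm} ω_{ik} ω_{l5} )`
holds at every point of `ℝ¹⁰` (sums over `i,k,l,m` from 1 to 4). -/
theorem stmt10 (Θ : (Fin 10 → ℝ) → ℝ) (hΘ : ContDiff ℝ (⊤ : ℕ∞) Θ) :
    ∀ pt : Fin 10 → ℝ,
      py5 (Fin.last 4)
          (fun q => ∑ i, ∑ k, ∑ l, ∑ m,
            eps4 i k l m * omg5 Θ (e45 i) (e45 k) q * omg5 Θ (e45 l) (e45 m) q) pt =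
        4 * ∑ m : Fin 4, py5 (e45 m)
          (fun q => ∑ i, ∑ k, ∑ l,
            eps4 i k l m * omg5 Θ (e45 i) (e45 k) q * omg5 Θ (e45 l) (Fin.last 4) q) pt := by
  intro pt
  have hsm2 : ∀ a b : Fin 5, ContDiff ℝ (⊤:ℕ∞) (px5 a (py5 b Θ)) :=
    fun a b => pd_contDiff _ (pd_contDiff _ hΘ)
  have hd2 : ∀ (a b : Fin 5) (p : Fin 10 → ℝ), DifferentiableAt ℝ (px5 a (py5 b Θ)) p :=
    fun a b p => ((hsm2 a b).differentiable (by simp)) p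
  have hod : ∀ (a b : Fin 5) (p : Fin 10 → ℝ), DifferentiableAt ℝ (omg5 Θ a b) p :=
    fun a b p => (((hsm2 a b).sub (hsm2 b a)).differentiable (by simp)) p
  have hdterm : ∀ (co : ℝ) (a b a' b' : Fin 5) (p : Fin 10 → ℝ),
      DifferentiableAt ℝ (fun q => co * omg5 Θ a b q * omg5 Θ a' b' q) p :=
    fun co a b a' b' p => ((hod a b p).const_mul co).mul (hod a' b' p)
  have hT : ∀ a b c : Fin 5,
      py5 c (px5 a (py5 b Θ)) pt = py5 b (px5 a (py5 c Θ)) pt := by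
    intro a b c
    have inner : pd (⟨c.val+5, by omega⟩ : Fin 10) (pd (⟨b.val+5, by omega⟩ : Fin 10) Θ)
        = pd (⟨b.val+5, by omega⟩ : Fin 10) (pd (⟨c.val+5, by omega⟩ : Fin 10) Θ) :=
      funext (pd_comm _ _ hΘ)
    show pd (⟨c.val+5, by omega⟩ : Fin 10)
        (pd (⟨a.val, by omega⟩ : Fin 10) (pd (⟨b.val+5, by omega⟩ : Fin 10) Θ)) pt
      = pd (⟨b.val+5, by omega⟩ : Fin 10)
        (pd (⟨a.val, by omega⟩ : Fin 10) (pd (⟨c.val+5, by omega⟩ : Fin 10) Θ)) pt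
    rw [pd_comm (⟨c.val+5, by omega⟩ : Fin 10) (⟨a.val, by omega⟩ : Fin 10)
        (pd_contDiff _ hΘ) pt, inner]
    exact pd_comm _ _ (pd_contDiff _ hΘ) pt
  have hdo : ∀ (c a b : Fin 5), py5 c (omg5 Θ a b) pt
      = py5 c (px5 a (py5 b Θ)) pt - py5 c (px5 b (py5 a Θ)) pt :=
    fun c a b => pd_sub _ (px5 a (py5 b Θ)) (px5 b (py5 a Θ)) pt (hd2 a b pt) (hd2 b a pt)
  have hL : py5 (Fin.last 4)
      (fun q => ∑ i : Fin 4, ∑ k : Fin 4, ∑ l : Fin 4, ∑ m : Fin 4,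
        eps4 i k l m * omg5 Θ (e45 i) (e45 k) q * omg5 Θ (e45 l) (e45 m) q) pt
      = ∑ i : Fin 4, ∑ k : Fin 4, ∑ l : Fin 4, ∑ m : Fin 4,
        (eps4 i k l m * (py5 (Fin.last 4) (omg5 Θ (e45 i) (e45 k)) pt * omg5 Θ (e45 l) (e45 m) pt)
          + eps4 i k l m * (omg5 Θ (e45 i) (e45 k) pt * py5 (Fin.last 4) (omg5 Θ (e45 l) (e45 m)) pt)) := by
    rw [py5_sum _ _ _ pt (fun i _ => DifferentiableAt.fun_sum fun k _ =>
      DifferentiableAt.fun_sum fun l _ => DifferentiableAt.fun_sum fun m _ => hdterm _ _ _ _ _ pt)]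
    refine Finset.sum_congr rfl fun i _ => ?_
    rw [py5_sum _ _ _ pt (fun k _ =>
      DifferentiableAt.fun_sum fun l _ => DifferentiableAt.fun_sum fun m _ => hdterm _ _ _ _ _ pt)]
    refine Finset.sum_congr rfl fun k _ => ?_
    rw [py5_sum _ _ _ pt (fun l _ => DifferentiableAt.fun_sum fun m _ => hdterm _ _ _ _ _ pt)]
    refine Finset.sum_congr rfl fun l _ => ?_
    rw [py5_sum _ _ _ pt (fun m _ => hdterm _ _ _ _ _ pt)]
    refine Finset.sum_congr rfl fun m _ => ?_
    exact py5_cmul_mul _ _ _ _ pt (hod _ _ pt) (hod _ _ pt)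
  have hR : ∀ m : Fin 4, py5 (e45 m)
      (fun q => ∑ i : Fin 4, ∑ k : Fin 4, ∑ l : Fin 4,
        eps4 i k l m * omg5 Θ (e45 i) (e45 k) q * omg5 Θ (e45 l) (Fin.last 4) q) pt
      = ∑ i : Fin 4, ∑ k : Fin 4, ∑ l : Fin 4,
        (eps4 i k l m * (py5 (e45 m) (omg5 Θ (e45 i) (e45 k)) pt * omg5 Θ (e45 l) (Fin.last 4) pt)
          + eps4 i k l m * (omg5 Θ (e45 i) (e45 k) pt * py5 (e45 m) (omg5 Θ (e45 l) (Fin.last 4)) pt)) := by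
    intro m
    rw [py5_sum _ _ _ pt (fun i _ =>
      DifferentiableAt.fun_sum fun k _ => DifferentiableAt.fun_sum fun l _ => hdterm _ _ _ _ _ pt)]
    refine Finset.sum_congr rfl fun i _ => ?_
    rw [py5_sum _ _ _ pt (fun k _ => DifferentiableAt.fun_sum fun l _ => hdterm _ _ _ _ _ pt)]
    refine Finset.sum_congr rfl fun k _ => ?_
    rw [py5_sum _ _ _ pt (fun l _ => hdterm _ _ _ _ _ pt)]
    refine Finset.sum_congr rfl fun l _ => ?_
    exact py5_cmul_mul _ _ _ _ pt (hod _ _ pt) (hod _ _ pt)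
  rw [hL, show (∑ m : Fin 4, py5 (e45 m)
      (fun q => ∑ i : Fin 4, ∑ k : Fin 4, ∑ l : Fin 4,
        eps4 i k l m * omg5 Θ (e45 i) (e45 k) q * omg5 Θ (e45 l) (Fin.last 4) q) pt)
      = ∑ m : Fin 4, ∑ i : Fin 4, ∑ k : Fin 4, ∑ l : Fin 4,
        (eps4 i k l m * (py5 (e45 m) (omg5 Θ (e45 i) (e45 k)) pt * omg5 Θ (e45 l) (Fin.last 4) pt)
          + eps4 i k l m * (omg5 Θ (e45 i) (e45 k) pt * py5 (e45 m) (omg5 Θ (e45 l) (Fin.last 4)) pt))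
      from Finset.sum_congr rfl fun m _ => hR m]
  simp only [hdo, show ∀ a b : Fin 5, omg5 Θ a b pt
    = px5 a (py5 b Θ) pt - px5 b (py5 a Θ) pt from fun a b => rfl]
  exact core (fun a b => px5 a (py5 b Θ) pt) (fun a b c => py5 c (px5 a (py5 b Θ)) pt) hT
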